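/- The induced matching number of G(m,n) equals min{m-1, n-1}. -/

import Mathlib

/-- The graph `G(m,n)`: vertices are pairs `(i,j)` (0-indexed, corresponding to
`x_{i+1,j+1}`), and `x_{i,j} ~ x_{k,l}` iff (`i < k` and `j > l`) or (`i > k` and `j < l`). -/
def gridGraph (m n : ℕ) : SimpleGraph (Fin m × Fin n) where
  Adj u v := (u.1 < v.1 ∧ v.2 < u.2) ∨ (v.1 < u.1 ∧ u.2 < v.2)
  symm := ⟨fun u v h => Or.symm h⟩
  loopless := ⟨fun u h => by rcases h with ⟨h, -⟩ | ⟨h, -⟩ <;> exact absurd h (lt_irrefl _)⟩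

/-- `M` is an induced matching of the induced subgraph of `G` on `A`:
a set of pairwise disjoint edges of `G` with all endpoints in `A`, such that the only
adjacencies among the endpoints are the edges of `M` themselves. -/
def IsInducedMatchingOn {V : Type*} (G : SimpleGraph V) (A : Set V) (M : Set (Sym2 V)) :
    Prop :=
  (∀ e ∈ M, ∀ v ∈ e, v ∈ A) ∧
  (∀ e ∈ M, ∃ u v, G.Adj u v ∧ e = s(u, v)) ∧
  (∀ e ∈ M, ∀ f ∈ M, e ≠ f → ∀ v ∈ e, v ∉ f) ∧
  (∀ u v : V, (∃ e ∈ M, u ∈ e) → (∃ e ∈ M, v ∈ e) → G.Adj u v → s(u, v) ∈ M)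

lemma gridGraph_adj {m n : ℕ} {u v : Fin m × Fin n} :
    (gridGraph m n).Adj u v ↔ (u.1 < v.1 ∧ v.2 < u.2) ∨ (v.1 < u.1 ∧ u.2 < v.2) :=
  Iff.rfl

/-- Endpoints of distinct edges of an induced matching are nonadjacent. -/
lemma cross_nonadj {V : Type*} {G : SimpleGraph V} {A : Set V}
    {M : Set (Sym2 V)} (h : IsInducedMatchingOn G A M)
    {e f : Sym2 V} {u v : V} (he : e ∈ M) (hf : f ∈ M) (hef : e ≠ f)
    (hu : u ∈ e) (hv : v ∈ f) : ¬ G.Adj u v := by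
  intro hadj
  obtain ⟨-, -, h3, h4⟩ := h
  have hmem : s(u, v) ∈ M := h4 u v ⟨e, he, hu⟩ ⟨f, hf, hv⟩ hadj
  by_cases hc : s(u, v) = e
  · exact h3 e he f hf hef v (hc ▸ Sym2.mem_mk_right u v) hv
  · exact h3 e he _ hmem (Ne.symm hc) u hu (Sym2.mem_mk_left u v)

/-- Every edge of an induced matching of `gridGraph` has a canonical representation. -/
lemma grid_rep {m n : ℕ} {M : Set (Sym2 (Fin m × Fin n))}
    (h : IsInducedMatchingOn (gridGraph m n) Set.univ M) {e : Sym2 (Fin m × Fin n)}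
    (he : e ∈ M) :
    ∃ u v : Fin m × Fin n, u.1 < v.1 ∧ v.2 < u.2 ∧ e = s(u, v) := by
  obtain ⟨u, v, hadj, rfl⟩ := h.2.1 e he
  rcases hadj with ⟨h1, h2⟩ | ⟨h1, h2⟩
  · exact ⟨u, v, h1, h2, rfl⟩
  · exact ⟨v, u, h1, h2, Sym2.eq_swap.symm⟩

/-- Separation of distinct edges of an induced matching, in both coordinates. -/
lemma grid_sep {m n : ℕ} {M : Set (Sym2 (Fin m × Fin n))}
    (h : IsInducedMatchingOn (gridGraph m n) Set.univ M)
    {e f : Sym2 (Fin m × Fin n)} (he : e ∈ M) (hf : f ∈ M) (hef : e ≠ f)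
    {u v u' v' : Fin m × Fin n}
    (hr : u.1 < v.1) (hc : v.2 < u.2) (hr' : u'.1 < v'.1) (hc' : v'.2 < u'.2)
    (hee : e = s(u, v)) (hff : f = s(u', v')) :
    ((v.1 : ℕ) ≤ (u'.1 : ℕ) ∨ (v'.1 : ℕ) ≤ (u.1 : ℕ)) ∧
      ((u.2 : ℕ) ≤ (v'.2 : ℕ) ∨ (u'.2 : ℕ) ≤ (v.2 : ℕ)) := by
  have n1 : ¬ (gridGraph m n).Adj u v' :=
    cross_nonadj h he hf hef (hee ▸ Sym2.mem_mk_left u v) (hff ▸ Sym2.mem_mk_right u' v')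
  have n2 : ¬ (gridGraph m n).Adj u' v :=
    cross_nonadj h hf he (Ne.symm hef) (hff ▸ Sym2.mem_mk_left u' v')
      (hee ▸ Sym2.mem_mk_right u v)
  have n3 : ¬ (gridGraph m n).Adj v u' :=
    cross_nonadj h he hf hef (hee ▸ Sym2.mem_mk_right u v) (hff ▸ Sym2.mem_mk_left u' v')
  have n4 : ¬ (gridGraph m n).Adj v' u :=
    cross_nonadj h hf he (Ne.symm hef) (hff ▸ Sym2.mem_mk_right u' v')
      (hee ▸ Sym2.mem_mk_left u v)
  rw [gridGraph_adj, not_or, Fin.lt_def, Fin.lt_def, Fin.lt_def, Fin.lt_def, not_and_or,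
    not_and_or, not_lt, not_lt, not_lt, not_lt] at n1 n2 n3 n4
  rw [Fin.lt_def] at hr hc hr' hc'
  constructor
  · -- rows
    by_contra hcon
    rw [not_or, not_le, not_le] at hcon
    obtain ⟨a1, a2⟩ := hcon
    -- a1 : u'.1 < v.1, a2 : u.1 < v'.1
    rcases n1.1 with h' | h' <;> rcases n2.1 with h'' | h'' <;> omega
  · -- columns
    by_contra hcon
    rw [not_or, not_le, not_le] at hcon
    obtain ⟨a1, a2⟩ := hcon
    rcases n3.2 with h' | h' <;> rcases n4.2 with h'' | h'' <;> omega

/-- The minimum row of an edge. -/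
noncomputable def minRow {m n : ℕ} : Sym2 (Fin m × Fin n) → ℕ :=
  Sym2.lift ⟨fun a b => min (a.1 : ℕ) (b.1 : ℕ), fun a b => min_comm _ _⟩

/-- The minimum column of an edge. -/
noncomputable def minCol {m n : ℕ} : Sym2 (Fin m × Fin n) → ℕ :=
  Sym2.lift ⟨fun a b => min (a.2 : ℕ) (b.2 : ℕ), fun a b => min_comm _ _⟩

lemma grid_ub {m n : ℕ} {M : Set (Sym2 (Fin m × Fin n))}
    (h : IsInducedMatchingOn (gridGraph m n) Set.univ M) :
    M.ncard ≤ min (m - 1) (n - 1) := by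
  have key : ∀ (f : Sym2 (Fin m × Fin n) → ℕ) (c : ℕ),
      (∀ e ∈ M, f e < c) → Set.InjOn f M → M.ncard ≤ c := by
    intro f c hmaps hinj
    calc M.ncard ≤ (↑(Finset.range c) : Set ℕ).ncard := by
          apply Set.ncard_le_ncard_of_injOn f _ hinj (Finset.finite_toSet _)
          intro e he
          simpa using hmaps e he
      _ = c := by rw [Set.ncard_coe_finset, Finset.card_range]
  rw [le_min_iff]
  constructor
  · -- rows
    apply key minRow (m - 1)
    · intro e he
      obtain ⟨u, v, hr, hc, rfl⟩ := grid_rep h he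
      rw [Fin.lt_def] at hr
      have hv := v.1.isLt
      simp only [minRow, Sym2.lift_mk]
      omega
    · intro e he f hf hval
      by_contra hef
      obtain ⟨u, v, hr, hc, hee⟩ := grid_rep h he
      obtain ⟨u', v', hr', hc', hff⟩ := grid_rep h hf
      have hsep := (grid_sep h he hf hef hr hc hr' hc' hee hff).1
      rw [hee, hff] at hval
      simp only [minRow, Sym2.lift_mk] at hval
      rw [Fin.lt_def] at hr hr'
      omega
  · -- columns
    apply key minCol (n - 1)
    · intro e he
      obtain ⟨u, v, hr, hc, rfl⟩ := grid_rep h he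
      rw [Fin.lt_def] at hc
      have hu := u.2.isLt
      simp only [minCol, Sym2.lift_mk]
      omega
    · intro e he f hf hval
      by_contra hef
      obtain ⟨u, v, hr, hc, hee⟩ := grid_rep h he
      obtain ⟨u', v', hr', hc', hff⟩ := grid_rep h hf
      have hsep := (grid_sep h he hf hef hr hc hr' hc' hee hff).2
      rw [hee, hff] at hval
      simp only [minCol, Sym2.lift_mk] at hval
      rw [Fin.lt_def] at hc hc'
      omega

/-- the induced matching number of `G(m,n)` equals `min (m-1) (n-1)`. -/
theorem stmt4 (m n : ℕ) (hm : 1 ≤ m) (hn : 1 ≤ n) :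
    IsGreatest {k | ∃ M : Set (Sym2 (Fin m × Fin n)),
        IsInducedMatchingOn (gridGraph m n) Set.univ M ∧ M.ncard = k}
      (min (m - 1) (n - 1)) := by
  constructor
  · -- construction
    set t := min (m - 1) (n - 1) with ht
    have hb1 : ∀ s : Fin t, (s : ℕ) < m := fun s => by have := s.isLt; omega
    have hb2 : ∀ s : Fin t, (s : ℕ) + 1 < n := fun s => by have := s.isLt; omega
    have hb3 : ∀ s : Fin t, (s : ℕ) + 1 < m := fun s => by have := s.isLt; omega
    have hb4 : ∀ s : Fin t, (s : ℕ) < n := fun s => by have := s.isLt; omega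
    set g : Fin t → Sym2 (Fin m × Fin n) := fun s =>
      s(((⟨s, hb1 s⟩ : Fin m), (⟨s + 1, hb2 s⟩ : Fin n)),
        ((⟨s + 1, hb3 s⟩ : Fin m), (⟨s, hb4 s⟩ : Fin n))) with hg
    have hginj : Function.Injective g := by
      intro a b hab
      simp only [hg, Sym2.eq, Sym2.rel_iff', Prod.mk.injEq, Prod.swap_prod_mk,
        Fin.mk.injEq] at hab
      apply Fin.ext
      omega
    refine ⟨Set.range g, ⟨fun e _ v _ => Set.mem_univ v, ?_, ?_, ?_⟩, ?_⟩
    · rintro e ⟨s, rfl⟩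
      refine ⟨_, _, ?_, rfl⟩
      rw [gridGraph_adj]
      left
      constructor <;> · rw [Fin.lt_def]; simp
    · rintro e ⟨s, rfl⟩ f ⟨s', rfl⟩ hef v hv hv'
      have hss' : (s : ℕ) ≠ (s' : ℕ) := by
        intro hval; exact hef (congrArg g (Fin.ext hval))
      rw [hg, Sym2.mem_iff] at hv hv'
      rcases hv with rfl | rfl <;> rcases hv' with hv' | hv' <;>
        · simp only [Prod.mk.injEq, Fin.mk.injEq] at hv'; omega
    · rintro u v ⟨e, ⟨s, rfl⟩, hu⟩ ⟨f, ⟨s', rfl⟩, hv⟩ hadj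
      rw [hg, Sym2.mem_iff] at hu hv
      rw [gridGraph_adj] at hadj
      rcases hu with rfl | rfl <;> rcases hv with rfl | rfl <;>
        simp only [Fin.lt_def] at hadj <;>
        [skip; skip; skip; skip]
      · omega
      · have : (s : ℕ) = (s' : ℕ) := by omega
        have hss : s = s' := Fin.ext this
        subst hss
        exact ⟨s, rfl⟩
      · have : (s : ℕ) = (s' : ℕ) := by omega
        have hss : s = s' := Fin.ext this
        subst hss
        exact ⟨s, Sym2.eq_swap⟩
      · omega
    · rw [← Set.image_univ, Set.ncard_image_of_injective _ hginj, Set.ncard_univ,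
        Nat.card_eq_fintype_card, Fintype.card_fin]
  · rintro k ⟨M, hM, rfl⟩
    exact grid_ub hM
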